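/- For every M > 0 and integers m, q, n ≥ 0 with m + q + n > 0 there exists a constant C, depending only on m, q, n, M, such that |∂_σⁿ ∂_τ^q ∂ₖᵐ u^{BS}(σ;τ,x,k)| ≤ C·e^k·σ^{−n+2q}·(σ√τ)^{1−m−2q} for all x, k ∈ ℝ and all σ, τ > 0 with σ√τ ≤ M. -/

import Mathlib

noncomputable def Gauss (t x : ℝ) : ℝ :=
  (Real.sqrt (2 * Real.pi * t))⁻¹ * Real.exp (-x ^ 2 / (2 * t))

/-- Standard normal cumulative distribution function. -/
noncomputable def normalCDF (x : ℝ) : ℝ :=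
  (Real.sqrt (2 * Real.pi))⁻¹ * ∫ s in Set.Iic x, Real.exp (-s ^ 2 / 2)

/-- Black–Scholes call price `u^{BS}(σ; τ, x, k)` in log variables. -/
noncomputable def uBS (σ τ x k : ℝ) : ℝ :=
  Real.exp x * normalCDF ((x - k + σ ^ 2 * τ / 2) / (σ * Real.sqrt τ)) -
    Real.exp k * normalCDF ((x - k - σ ^ 2 * τ / 2) / (σ * Real.sqrt τ))

open Real


noncomputable def phi (y : ℝ) : ℝ := (Real.sqrt (2 * Real.pi))⁻¹ * Real.exp (-y ^ 2 / 2)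

lemma gauss_integrable : MeasureTheory.Integrable (fun s : ℝ => Real.exp (-s ^ 2 / 2)) := by
  have h := integrable_exp_neg_mul_sq (by norm_num : (0:ℝ) < 1/2)
  convert h using 2 with s
  ring_nf

lemma hasDerivAt_normalCDF (y : ℝ) : HasDerivAt normalCDF (phi y) y := by
  have key : ∀ x : ℝ, normalCDF x = (Real.sqrt (2 * Real.pi))⁻¹ *
      ((∫ s in Set.Iic (0:ℝ), Real.exp (-s ^ 2 / 2)) + ∫ s in (0:ℝ)..x, Real.exp (-s ^ 2 / 2)) := by
    intro x
    unfold normalCDF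
    rw [← intervalIntegral.integral_Iic_sub_Iic (gauss_integrable.integrableOn)
      (gauss_integrable.integrableOn)]
    ring
  have hcont : Continuous (fun s : ℝ => Real.exp (-s ^ 2 / 2)) := by continuity
  have hd : HasDerivAt (fun u : ℝ => ∫ s in (0:ℝ)..u, Real.exp (-s ^ 2 / 2))
      (Real.exp (-y ^ 2 / 2)) y :=
    intervalIntegral.integral_hasDerivAt_right (gauss_integrable.intervalIntegrable)
      (hcont.stronglyMeasurableAtFilter _ _) hcont.continuousAt
  have : HasDerivAt (fun x : ℝ => (Real.sqrt (2 * Real.pi))⁻¹ *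
      ((∫ s in Set.Iic (0:ℝ), Real.exp (-s ^ 2 / 2)) + ∫ s in (0:ℝ)..x, Real.exp (-s ^ 2 / 2)))
      (phi y) y := by
    simpa [phi, mul_comm] using ((hd.const_add _).const_mul (Real.sqrt (2 * Real.pi))⁻¹)
  exact this.congr_of_eventuallyEq (Filter.Eventually.of_forall fun x => key x)

lemma sqrt_two_pi_pos : 0 < Real.sqrt (2 * Real.pi) :=
  Real.sqrt_pos.2 (by positivity)

lemma normalCDF_nonneg (y : ℝ) : 0 ≤ normalCDF y := by
  unfold normalCDF
  apply mul_nonneg (by positivity)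
  apply MeasureTheory.integral_nonneg
  intro s; positivity

lemma normalCDF_le_one (y : ℝ) : normalCDF y ≤ 1 := by
  unfold normalCDF
  have h1 : (∫ s in Set.Iic y, Real.exp (-s ^ 2 / 2)) ≤ ∫ s : ℝ, Real.exp (-s ^ 2 / 2) :=
    MeasureTheory.setIntegral_le_integral gauss_integrable
      (Filter.Eventually.of_forall fun s => by positivity)
  have h2 : (∫ s : ℝ, Real.exp (-s ^ 2 / 2)) = Real.sqrt (2 * Real.pi) := by
    have h := integral_gaussian (1/2)
    have heq : (fun s : ℝ => Real.exp (-s ^ 2 / 2)) = fun s : ℝ => Real.exp (-(1/2) * s ^ 2) := by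
      funext s; ring_nf
    rw [heq, h, show Real.pi / (1/2) = 2 * Real.pi by ring]
  rw [h2] at h1
  rw [inv_mul_le_iff₀ sqrt_two_pi_pos]
  linarith

lemma abs_normalCDF_le_one (y : ℝ) : |normalCDF y| ≤ 1 :=
  abs_le.2 ⟨by linarith [normalCDF_nonneg y], normalCDF_le_one y⟩

lemma pow_mul_phi_le (i : ℕ) (y : ℝ) : |y ^ i * phi y| ≤ i.factorial * Real.exp 1 := by
  have h0 : |y ^ i * phi y| = |y| ^ i * phi y := by
    rw [abs_mul, abs_pow]
    congr 1
    exact abs_of_nonneg (by unfold phi; positivity)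
  rw [h0]
  have h1 : |y| ^ i ≤ i.factorial * Real.exp |y| := by
    have := Real.sum_le_exp_of_nonneg (abs_nonneg y) (i + 1)
    have h2 : |y| ^ i / i.factorial ≤ Real.exp |y| := by
      calc |y| ^ i / i.factorial ≤ ∑ j ∈ Finset.range (i+1), |y| ^ j / j.factorial :=
            Finset.single_le_sum (f := fun j => |y| ^ j / (j.factorial : ℝ))
              (fun j _ => by positivity) (Finset.self_mem_range_succ i)
        _ ≤ Real.exp |y| := this
    have hfac : (0:ℝ) < i.factorial := by positivity
    calc |y| ^ i = i.factorial * (|y| ^ i / i.factorial) := by field_simp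
      _ ≤ i.factorial * Real.exp |y| := by
          exact mul_le_mul_of_nonneg_left h2 (le_of_lt hfac)
  have hphi : phi y ≤ Real.exp (-y ^ 2 / 2) := by
    unfold phi
    have : (Real.sqrt (2 * Real.pi))⁻¹ ≤ 1 := by
      rw [inv_le_one_iff₀]
      right
      rw [show (1:ℝ) = Real.sqrt 1 from (Real.sqrt_one).symm]
      exact Real.sqrt_le_sqrt (by nlinarith [Real.pi_gt_three])
    nlinarith [Real.exp_pos (-y ^ 2 / 2)]
  calc |y| ^ i * phi y ≤ (i.factorial * Real.exp |y|) * Real.exp (-y ^ 2 / 2) := by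
        apply mul_le_mul h1 hphi (by unfold phi; positivity)
        positivity
    _ = i.factorial * Real.exp (|y| - y ^ 2 / 2) := by rw [mul_assoc, ← Real.exp_add]; ring_nf
    _ ≤ i.factorial * Real.exp 1 := by
        apply mul_le_mul_of_nonneg_left _ (by positivity)
        apply Real.exp_le_exp.2
        nlinarith [sq_nonneg (|y| - 1), sq_abs y]



noncomputable def dmi (x k v : ℝ) : ℝ := (x - k - v ^ 2 / 2) / v

abbrev Mono : Type := ℝ × ℤ × ℕ

noncomputable def evalM (x k v : ℝ) (mo : Mono) : ℝ :=
  mo.1 * v ^ mo.2.1 * (dmi x k v) ^ mo.2.2 * phi (dmi x k v)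

abbrev Expr : Type := ℝ × List Mono

noncomputable def evalE (x k v : ℝ) (e : Expr) : ℝ :=
  e.1 * normalCDF (dmi x k v) + ((e.2.map (evalM x k v)).sum)

def dkM (mo : Mono) : List Mono :=
  [(mo.1, mo.2.1, mo.2.2), (-(mo.1 * (mo.2.2 : ℝ)), mo.2.1 - 1, mo.2.2 - 1),
   (mo.1, mo.2.1 - 1, mo.2.2 + 1)]

def Dk (e : Expr) : Expr := (e.1, (-e.1, -1, 0) :: e.2.flatMap dkM)

def dvM (mo : Mono) : List Mono :=
  [(mo.1 * (mo.2.1 : ℝ), mo.2.1 - 1, mo.2.2), (-(mo.1 * (mo.2.2 : ℝ)), mo.2.1 - 1, mo.2.2),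
   (-(mo.1 * (mo.2.2 : ℝ)), mo.2.1, mo.2.2 - 1), (mo.1, mo.2.1 - 1, mo.2.2 + 2),
   (mo.1, mo.2.1, mo.2.2 + 1)]

def Dv (e : Expr) : Expr := (0, (-e.1, -1, 1) :: (-e.1, 0, 0) :: e.2.flatMap dvM)

noncomputable def halfM (mo : Mono) : Mono := (mo.1 / 2, mo.2.1 - 1, mo.2.2)

noncomputable def Dw (e : Expr) : Expr := (0, (Dv e).2.map halfM)

noncomputable def scaleE (s : ℝ) (e : Expr) : Expr := (s * e.1, e.2.map fun mo => (s * mo.1, mo.2))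

-- generic helpers

lemma HasDerivAt.congr_fun' {f g : ℝ → ℝ} {f' t : ℝ} (h : HasDerivAt f f' t)
    (hfg : ∀ s, g s = f s) : HasDerivAt g f' t :=
  h.congr_of_eventuallyEq (Filter.Eventually.of_forall hfg)

lemma hasDerivAt_list_sum {α : Type*} (L : List α) (f : α → ℝ → ℝ) (f' : α → ℝ) (t : ℝ)
    (h : ∀ a ∈ L, HasDerivAt (f a) (f' a) t) :
    HasDerivAt (fun s => (L.map (fun a => f a s)).sum) ((L.map f').sum) t := by
  induction L with
  | nil => simpa using hasDerivAt_const t (0:ℝ)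
  | cons a L ih =>
    simp only [List.map_cons, List.sum_cons]
    exact ((h a (by simp)).add (ih (fun b hb => h b (by simp [hb]))))

lemma sum_map_flatMap {α β : Type*} (L : List α) (g : α → List β) (f : β → ℝ) :
    ((L.flatMap g).map f).sum = (L.map (fun a => ((g a).map f).sum)).sum := by
  induction L with
  | nil => simp
  | cons a L ih => simp [ih]

-- derivatives of building blocks

lemma hasDerivAt_phi (y : ℝ) : HasDerivAt phi (-y * phi y) y := by
  have h1 : HasDerivAt (fun y : ℝ => -y ^ 2 / 2) (-y) y := by
    have := ((hasDerivAt_pow 2 y).neg).div_const 2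
    simpa using this.congr_deriv (by ring)
  have h2 := (h1.exp).const_mul (Real.sqrt (2 * Real.pi))⁻¹
  exact (h2.congr_fun' (fun s => by simp [phi])).congr_deriv (by simp [phi]; ring)

lemma hasDerivAt_dmi_k (x v : ℝ) (hv : v ≠ 0) (k : ℝ) :
    HasDerivAt (fun k' => dmi x k' v) (-v⁻¹) k := by
  have h := (((hasDerivAt_id k).const_sub x).sub_const (v ^ 2 / 2)).div_const v
  exact (h.congr_fun' (fun s => by simp [dmi])).congr_deriv (by field_simp)

lemma hasDerivAt_dmi_v (x k : ℝ) {v : ℝ} (hv : v ≠ 0) :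
    HasDerivAt (fun v' => dmi x k v') (-(dmi x k v) / v - 1) v := by
  have h1 : HasDerivAt (fun v' : ℝ => x - k - v' ^ 2 / 2) (-v) v := by
    have := ((hasDerivAt_pow 2 v).div_const 2).const_sub (x - k)
    simpa using this.congr_deriv (by ring)
  have h2 := h1.div (hasDerivAt_id v) hv
  refine (h2.congr_fun' (fun s => by simp [dmi])).congr_deriv ?_
  simp only [dmi, id]
  field_simp
  ring

lemma zpow_sub_one' {v : ℝ} (hv : v ≠ 0) (a : ℤ) : v ^ (a - 1) = v ^ a * v⁻¹ := by
  rw [zpow_sub₀ hv, zpow_one]; rfl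

lemma hasDerivAt_evalM_k (x v : ℝ) (hv : v ≠ 0) (k : ℝ) (mo : Mono) :
    HasDerivAt (fun k' => Real.exp k' * evalM x k' v mo)
      (Real.exp k * ((dkM mo).map (evalM x k v)).sum) k := by
  obtain ⟨r, a, i⟩ := mo
  have hy := hasDerivAt_dmi_k x v hv k
  set y := dmi x k v with hydef
  have hpow : HasDerivAt (fun k' => (dmi x k' v) ^ i) ((i : ℝ) * y ^ (i - 1) * (-v⁻¹)) k :=
    HasDerivAt.pow hy i
  have hphi : HasDerivAt (fun k' => phi (dmi x k' v)) (-y * phi y * (-v⁻¹)) k := by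
    have := (hasDerivAt_phi y).comp k hy
    simpa [Function.comp_def] using this
  have hF := hpow.mul hphi
  have hG := (Real.hasDerivAt_exp k).mul hF
  have h := hG.const_mul (r * v ^ a)
  refine (h.congr_fun' (fun s => by simp [evalM]; ring)).congr_deriv ?_
  simp only [dkM, evalM, List.map_cons, List.map_nil, List.sum_cons, List.sum_nil, add_zero]
  rw [zpow_sub_one' hv a]
  cases i with
  | zero => simp only [Pi.mul_apply, ← hydef]; push_cast; ring
  | succ j => simp only [Pi.mul_apply, ← hydef]; push_cast [pow_succ]; ring

lemma hasDerivAt_evalM_v (x k : ℝ) {v : ℝ} (hv : v ≠ 0) (mo : Mono) :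
    HasDerivAt (fun v' => evalM x k v' mo)
      (((dvM mo).map (evalM x k v)).sum) v := by
  obtain ⟨r, a, i⟩ := mo
  have hy := hasDerivAt_dmi_v x k hv
  set y := dmi x k v with hydef
  have hzpow : HasDerivAt (fun v' : ℝ => v' ^ a) ((a : ℝ) * v ^ (a - 1)) v :=
    hasDerivAt_zpow a v (Or.inl hv)
  have hpow : HasDerivAt (fun v' => (dmi x k v') ^ i) ((i : ℝ) * y ^ (i - 1) * (-y / v - 1)) v :=
    HasDerivAt.pow hy i
  have hphi : HasDerivAt (fun v' => phi (dmi x k v')) (-y * phi y * (-y / v - 1)) v := by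
    have := (hasDerivAt_phi y).comp v hy
    simpa [Function.comp_def] using this
  have hF := (hzpow.mul hpow).mul hphi
  have h := hF.const_mul r
  refine (h.congr_fun' (fun s => by simp [evalM]; ring)).congr_deriv ?_
  simp only [dvM, evalM, List.map_cons, List.map_nil, List.sum_cons, List.sum_nil, add_zero]
  rw [zpow_sub_one' hv a]
  cases i with
  | zero => simp only [Pi.mul_apply, ← hydef]; push_cast; field_simp; ring
  | succ j => simp only [Pi.mul_apply, ← hydef]; push_cast [pow_succ]; field_simp; ring

lemma hasDerivAt_evalE_k (x v : ℝ) (hv : v ≠ 0) (k : ℝ) (e : Expr) :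
    HasDerivAt (fun k' => Real.exp k' * evalE x k' v e)
      (Real.exp k * evalE x k v (Dk e)) k := by
  obtain ⟨c, L⟩ := e
  have hy := hasDerivAt_dmi_k x v hv k
  have hN : HasDerivAt (fun k' => Real.exp k' * (c * normalCDF (dmi x k' v)))
      (Real.exp k * (c * normalCDF (dmi x k v)) +
        Real.exp k * (c * (phi (dmi x k v) * (-v⁻¹)))) k := by
    have hn : HasDerivAt (fun k' => normalCDF (dmi x k' v)) (phi (dmi x k v) * (-v⁻¹)) k := by
      have := (hasDerivAt_normalCDF (dmi x k v)).comp k hy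
      simpa [Function.comp_def] using this
    exact (Real.hasDerivAt_exp k).mul (hn.const_mul c)
  have hL : HasDerivAt (fun k' => (L.map (fun mo => Real.exp k' * evalM x k' v mo)).sum)
      ((L.map (fun mo => Real.exp k * ((dkM mo).map (evalM x k v)).sum)).sum) k :=
    hasDerivAt_list_sum L _ _ k (fun mo _ => hasDerivAt_evalM_k x v hv k mo)
  have h := hN.add hL
  refine (h.congr_fun' (fun s => ?_)).congr_deriv ?_
  · simp only [evalE, List.sum_map_mul_left, Pi.add_apply]
    ring
  · simp only [evalE, Dk, List.map_cons, List.sum_cons]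
    rw [sum_map_flatMap, List.sum_map_mul_left]
    simp only [evalM, zpow_neg_one, pow_zero]
    ring

lemma hasDerivAt_evalE_v (x k : ℝ) {v : ℝ} (hv : v ≠ 0) (e : Expr) :
    HasDerivAt (fun v' => evalE x k v' e) (evalE x k v (Dv e)) v := by
  obtain ⟨c, L⟩ := e
  have hy := hasDerivAt_dmi_v x k hv
  have hN : HasDerivAt (fun v' => c * normalCDF (dmi x k v'))
      (c * (phi (dmi x k v) * (-(dmi x k v) / v - 1))) v := by
    have hn : HasDerivAt (fun v' => normalCDF (dmi x k v'))
        (phi (dmi x k v) * (-(dmi x k v) / v - 1)) v := by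
      have := (hasDerivAt_normalCDF (dmi x k v)).comp v hy
      simpa [Function.comp_def] using this
    exact hn.const_mul c
  have hL : HasDerivAt (fun v' => (L.map (evalM x k v')).sum)
      ((L.map (fun mo => ((dvM mo).map (evalM x k v)).sum)).sum) v := by
    have := hasDerivAt_list_sum L (fun mo v' => evalM x k v' mo)
      (fun mo => ((dvM mo).map (evalM x k v)).sum) v
      (fun mo _ => hasDerivAt_evalM_v x k hv mo)
    exact this
  have h := hN.add hL
  refine (h.congr_fun' (fun s => by simp [evalE])).congr_deriv ?_
  simp only [evalE, Dv, List.map_cons, List.sum_cons]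
  rw [sum_map_flatMap]
  simp only [evalM, zpow_neg_one, zpow_zero, pow_zero, pow_one]
  push_cast
  ring

lemma evalE_Dw (x k : ℝ) {v : ℝ} (hv : v ≠ 0) (e : Expr) :
    evalE x k v (Dw e) = evalE x k v (Dv e) / (2 * v) := by
  obtain ⟨c, L⟩ := e
  simp only [Dw, Dv, evalE, zero_mul, zero_add]
  rw [eq_div_iff (by simp [hv] : (2:ℝ) * v ≠ 0)]
  induction ((-c, (-1:ℤ), 1) :: (-c, (0:ℤ), 0) :: L.flatMap dvM) with
  | nil => simp
  | cons mo L' ih =>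
    simp only [List.map_cons, List.sum_cons, add_mul, ih]
    congr 1
    obtain ⟨r, a, i⟩ := mo
    simp only [halfM, evalM, zpow_sub_one' hv]
    field_simp
    try ring

lemma evalE_scaleE (x k v s : ℝ) (e : Expr) :
    evalE x k v (scaleE s e) = s * evalE x k v e := by
  obtain ⟨c, L⟩ := e
  simp only [scaleE, evalE, mul_add]
  congr 1
  · ring
  · rw [← List.sum_map_mul_left, List.map_map]
    refine congrArg List.sum (List.map_congr_left fun mo _ => ?_)
    obtain ⟨r, a, i⟩ := mo
    simp [evalM, Function.comp]
    ring


noncomputable def dpl (x k v : ℝ) : ℝ := (x - k + v ^ 2 / 2) / v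

lemma uBS_eq (σ τ x k : ℝ) (hτ : 0 ≤ τ) :
    uBS σ τ x k = Real.exp x * normalCDF (dpl x k (σ * Real.sqrt τ)) -
      Real.exp k * normalCDF (dmi x k (σ * Real.sqrt τ)) := by
  have h : (σ * Real.sqrt τ) ^ 2 = σ ^ 2 * τ := by
    rw [mul_pow, Real.sq_sqrt hτ]
  simp only [uBS, dpl, dmi, h]

lemma phi_identity (x k : ℝ) {v : ℝ} (hv : v ≠ 0) :
    Real.exp x * phi (dpl x k v) = Real.exp k * phi (dmi x k v) := by
  simp only [phi, dpl, dmi]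
  rw [show ∀ a b : ℝ, Real.exp a * ((Real.sqrt (2*Real.pi))⁻¹ * Real.exp b) =
    (Real.sqrt (2*Real.pi))⁻¹ * Real.exp (a + b) from fun a b => by rw [Real.exp_add]; ring]
  rw [show ∀ a b : ℝ, Real.exp a * ((Real.sqrt (2*Real.pi))⁻¹ * Real.exp b) =
    (Real.sqrt (2*Real.pi))⁻¹ * Real.exp (a + b) from fun a b => by rw [Real.exp_add]; ring]
  congr 1
  field_simp
  ring

lemma hasDerivAt_dpl_k (x v : ℝ) (hv : v ≠ 0) (k : ℝ) :
    HasDerivAt (fun k' => dpl x k' v) (-v⁻¹) k := by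
  have h := (((hasDerivAt_id k).const_sub x).add_const (v ^ 2 / 2)).div_const v
  refine (h.congr_fun' (fun s => by simp [dpl]; try ring)).congr_deriv (by field_simp)

lemma hasDerivAt_dpl_v (x k : ℝ) {v : ℝ} (hv : v ≠ 0) :
    HasDerivAt (fun v' => dpl x k v') (-(dpl x k v) / v + 1) v := by
  have h1 : HasDerivAt (fun v' : ℝ => x - k + v' ^ 2 / 2) v v := by
    have := ((hasDerivAt_pow 2 v).div_const 2).const_add (x - k)
    simpa using this.congr_deriv (by ring)
  have h2 := h1.div (hasDerivAt_id v) hv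
  refine (h2.congr_fun' (fun s => by simp [dpl])).congr_deriv ?_
  simp only [dpl, id]
  field_simp
  ring

/-- derivative of uBS in k -/
lemma hasDerivAt_uBS_k (x σ τ : ℝ) (hσ : 0 < σ) (hτ : 0 < τ) (k : ℝ) :
    HasDerivAt (fun k' => uBS σ τ x k')
      (Real.exp k * evalE x k (σ * Real.sqrt τ) ((-1 : ℝ), ([] : List Mono))) k := by
  set v := σ * Real.sqrt τ with hvdef
  have hv : v ≠ 0 := by positivity
  have h1 : HasDerivAt (fun k' => Real.exp x * normalCDF (dpl x k' v))
      (Real.exp x * (phi (dpl x k v) * (-v⁻¹))) k := by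
    have := ((hasDerivAt_normalCDF (dpl x k v)).comp k (hasDerivAt_dpl_k x v hv k)).const_mul
      (Real.exp x)
    simpa [Function.comp] using this
  have h2 : HasDerivAt (fun k' => Real.exp k' * normalCDF (dmi x k' v))
      (Real.exp k * normalCDF (dmi x k v) + Real.exp k * (phi (dmi x k v) * (-v⁻¹))) k := by
    have hn : HasDerivAt (fun k' => normalCDF (dmi x k' v)) (phi (dmi x k v) * (-v⁻¹)) k := by
      have := (hasDerivAt_normalCDF (dmi x k v)).comp k (hasDerivAt_dmi_k x v hv k)
      simpa [Function.comp_def] using this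
    exact (Real.hasDerivAt_exp k).mul hn
  have h := h1.sub h2
  refine (h.congr_fun' (fun s => uBS_eq σ τ x s hτ.le)).congr_deriv ?_
  have hid := phi_identity x k hv
  simp only [evalE, List.map_nil, List.sum_nil, add_zero]
  rw [show Real.exp x * (phi (dpl x k v) * (-v⁻¹)) =
        (Real.exp x * phi (dpl x k v)) * (-v⁻¹) by ring, hid]
  ring

/-- the function v ↦ uBS as function of v has derivative e^k φ(d₋) -/
lemma hasDerivAt_Ufun (x k : ℝ) {v : ℝ} (hv : v ≠ 0) :
    HasDerivAt (fun v' => Real.exp x * normalCDF (dpl x k v') -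
        Real.exp k * normalCDF (dmi x k v'))
      (Real.exp k * phi (dmi x k v)) v := by
  have h1 : HasDerivAt (fun v' => Real.exp x * normalCDF (dpl x k v'))
      (Real.exp x * (phi (dpl x k v) * (-(dpl x k v) / v + 1))) v := by
    have := ((hasDerivAt_normalCDF (dpl x k v)).comp v (hasDerivAt_dpl_v x k hv)).const_mul
      (Real.exp x)
    simpa [Function.comp] using this
  have h2 : HasDerivAt (fun v' => Real.exp k * normalCDF (dmi x k v'))
      (Real.exp k * (phi (dmi x k v) * (-(dmi x k v) / v - 1))) v := by
    have := ((hasDerivAt_normalCDF (dmi x k v)).comp v (hasDerivAt_dmi_v x k hv)).const_mul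
      (Real.exp k)
    simpa [Function.comp] using this
  refine (h1.sub h2).congr_deriv ?_
  have hid := phi_identity x k hv
  rw [show Real.exp x * (phi (dpl x k v) * (-(dpl x k v) / v + 1)) =
        (Real.exp x * phi (dpl x k v)) * (-(dpl x k v) / v + 1) by ring, hid]
  have hkey : -(dpl x k v) / v + 1 - (-(dmi x k v) / v - 1) = 1 := by
    simp only [dpl, dmi]
    field_simp
    ring
  calc Real.exp k * phi (dmi x k v) * (-(dpl x k v) / v + 1) -
        Real.exp k * (phi (dmi x k v) * (-(dmi x k v) / v - 1))
      = Real.exp k * phi (dmi x k v) *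
          ((-(dpl x k v) / v + 1) - (-(dmi x k v) / v - 1)) := by ring
    _ = Real.exp k * phi (dmi x k v) := by rw [hkey, mul_one]

lemma hasDerivAt_uBS_tau (x k σ : ℝ) (hσ : 0 < σ) {τ : ℝ} (hτ : 0 < τ) :
    HasDerivAt (fun τ' => uBS σ τ' x k)
      (σ ^ 2 * (Real.exp k * evalE x k (σ * Real.sqrt τ)
        ((0:ℝ), [((1:ℝ)/2, (-1:ℤ), (0:ℕ))]))) τ := by
  set v := σ * Real.sqrt τ with hvdef
  have hst : Real.sqrt τ ≠ 0 := by positivity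
  have hv : v ≠ 0 := by positivity
  have hq : HasDerivAt (fun τ' => σ * Real.sqrt τ') (σ * (1 / (2 * Real.sqrt τ))) τ :=
    (Real.hasDerivAt_sqrt hτ.ne').const_mul σ
  have hU := (hasDerivAt_Ufun x k hv).comp τ hq
  refine (HasDerivAt.congr_of_eventuallyEq hU ?_).congr_deriv ?_
  · filter_upwards [isOpen_Ioi.mem_nhds (Set.mem_Ioi.2 hτ)] with s hs
    exact uBS_eq σ s x k hs.le
  · simp only [evalE, evalM, List.map_cons, List.map_nil, List.sum_cons, List.sum_nil]
    simp only [zpow_neg_one, pow_zero, zero_mul, zero_add, add_zero]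
    field_simp
    ring

lemma hasDerivAt_uBS_sigma (x k τ : ℝ) (hτ : 0 < τ) {σ : ℝ} (hσ : 0 < σ) :
    HasDerivAt (fun σ' => uBS σ' τ x k)
      (σ ^ (-1 : ℤ) * τ ^ (0:ℕ) * (Real.exp k * evalE x k (σ * Real.sqrt τ)
        ((0:ℝ), [((1:ℝ), (1:ℤ), (0:ℕ))]))) σ := by
  set v := σ * Real.sqrt τ with hvdef
  have hst : Real.sqrt τ ≠ 0 := by positivity
  have hv : v ≠ 0 := by positivity
  have hq : HasDerivAt (fun σ' => σ' * Real.sqrt τ) (Real.sqrt τ) σ := by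
    simpa using (hasDerivAt_id σ).mul_const (Real.sqrt τ)
  have hU := (hasDerivAt_Ufun x k hv).comp σ hq
  refine (hU.congr_fun' (fun s => ?_)).congr_deriv ?_
  · exact uBS_eq s τ x k (le_of_lt hτ)
  · simp only [evalE, evalM, List.map_cons, List.map_nil, List.sum_cons, List.sum_nil]
    simp only [zpow_neg_one, zpow_one, pow_zero, zero_mul, zero_add, add_zero]
    field_simp
    ring

/-- generic localization lemma for iterated derivatives -/
lemma genIter {U : Set ℝ} (hU : IsOpen U) (F : ℕ → ℝ → ℝ) (G : ℝ → ℝ)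
    (h0 : ∀ t ∈ U, G t = F 0 t)
    (hstep : ∀ j t, t ∈ U → HasDerivAt (F j) (F (j+1) t) t) :
    ∀ j, ∀ t ∈ U, iteratedDeriv j G t = F j t := by
  intro j
  induction j with
  | zero => intro t ht; simpa using h0 t ht
  | succ j ih =>
    intro t ht
    rw [iteratedDeriv_succ]
    have heq : (iteratedDeriv j G) =ᶠ[nhds t] F j := by
      filter_upwards [hU.mem_nhds ht] with s hs using ih s hs
    rw [heq.deriv_eq]
    exact (hstep j t ht).deriv

/-- τ-level single step -/
lemma tau_step (x k σ : ℝ) (hσ : 0 < σ) {τ : ℝ} (hτ : 0 < τ) (j : ℕ) (e : Expr) :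
    HasDerivAt (fun τ' => σ ^ (2*j) * (Real.exp k * evalE x k (σ * Real.sqrt τ') e))
      (σ ^ (2*(j+1)) * (Real.exp k * evalE x k (σ * Real.sqrt τ) (Dw e))) τ := by
  set v := σ * Real.sqrt τ with hvdef
  have hst : Real.sqrt τ ≠ 0 := by positivity
  have hv : v ≠ 0 := by positivity
  have hq : HasDerivAt (fun τ' => σ * Real.sqrt τ') (σ * (1 / (2 * Real.sqrt τ))) τ :=
    (Real.hasDerivAt_sqrt hτ.ne').const_mul σ
  have h2 := (hasDerivAt_evalE_v x k hv e).comp τ hq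
  have h3 := h2.const_mul (σ ^ (2*j) * Real.exp k)
  refine (h3.congr_fun' (fun s => by simp only [Function.comp_apply]; ring)).congr_deriv ?_
  rw [evalE_Dw x k hv e]
  have h2j : σ ^ (2*(j+1)) = σ ^ (2*j) * σ ^ 2 := by
    rw [show 2*(j+1) = 2*j + 2 from by ring, pow_add]
  rw [h2j]
  field_simp
  ring

/-- σ-level single step on entries -/
abbrev Entry : Type := ℤ × ℕ × Expr
abbrev Ents : Type := List Entry

noncomputable def evalT (x k τ : ℝ) (en : Entry) (σ : ℝ) : ℝ :=
  σ ^ en.1 * τ ^ en.2.1 * (Real.exp k * evalE x k (σ * Real.sqrt τ) en.2.2)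

noncomputable def evalS (x k τ : ℝ) (S : Ents) (σ : ℝ) : ℝ :=
  (S.map (fun en => evalT x k τ en σ)).sum

noncomputable def DsE (en : Entry) : Ents :=
  [(en.1 - 1, en.2.1, scaleE (en.1 : ℝ) en.2.2),
   (en.1 + 1, en.2.1 + 1, scaleE 2 (Dw en.2.2))]

noncomputable def Ds (S : Ents) : Ents := S.flatMap DsE

lemma entry_step (x k τ : ℝ) (hτ : 0 < τ) {σ : ℝ} (hσ : 0 < σ) (en : Entry) :
    HasDerivAt (fun σ' => evalT x k τ en σ')
      (((DsE en).map (fun en' => evalT x k τ en' σ)).sum) σ := by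
  obtain ⟨b, c, e⟩ := en
  set v := σ * Real.sqrt τ with hvdef
  have hst : Real.sqrt τ ≠ 0 := by positivity
  have hv : v ≠ 0 := by positivity
  have hsq : Real.sqrt τ * Real.sqrt τ = τ := Real.mul_self_sqrt hτ.le
  have h1 : HasDerivAt (fun σ' : ℝ => σ' ^ b) ((b:ℝ) * σ ^ (b-1)) σ :=
    hasDerivAt_zpow b σ (Or.inl hσ.ne')
  have hq : HasDerivAt (fun σ' => σ' * Real.sqrt τ) (Real.sqrt τ) σ := by
    simpa using (hasDerivAt_id σ).mul_const (Real.sqrt τ)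
  have h2 : HasDerivAt (fun σ' => evalE x k (σ' * Real.sqrt τ) e)
      (evalE x k v (Dv e) * Real.sqrt τ) σ := by
    have := (hasDerivAt_evalE_v x k hv e).comp σ hq
    simpa [Function.comp_def] using this
  have h3 := h1.mul (h2.const_mul (τ ^ c * Real.exp k))
  refine (h3.congr_fun' (fun s => by simp [evalT]; ring)).congr_deriv ?_
  simp only [DsE, List.map_cons, List.map_nil, List.sum_cons, List.sum_nil, add_zero, evalT]
  rw [evalE_scaleE, evalE_scaleE, evalE_Dw x k hv e]
  rw [zpow_sub_one' hσ.ne', zpow_add_one₀ hσ.ne', pow_succ, hvdef]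
  have hsq' : τ = Real.sqrt τ * Real.sqrt τ := (Real.mul_self_sqrt hτ.le).symm
  generalize hgen : Real.sqrt τ = s at hst hsq' ⊢
  rw [hsq']
  field_simp

lemma sigma_step (x k τ : ℝ) (hτ : 0 < τ) {σ : ℝ} (hσ : 0 < σ) (S : Ents) :
    HasDerivAt (fun σ' => evalS x k τ S σ') (evalS x k τ (Ds S) σ) σ := by
  have h := hasDerivAt_list_sum S (fun en σ' => evalT x k τ en σ')
    (fun en => ((DsE en).map (fun en' => evalT x k τ en' σ)).sum) σ
    (fun en _ => entry_step x k τ hτ hσ en)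
  refine h.congr_deriv ?_
  rw [evalS, Ds, sum_map_flatMap]

def baseE : Expr := ((-1:ℝ), ([] : List Mono))
noncomputable def E0' : Expr := ((0:ℝ), [((1:ℝ)/2, (-1:ℤ), (0:ℕ))])
noncomputable def S1 : Ents := [((-1:ℤ), (0:ℕ), ((0:ℝ), [((1:ℝ), (1:ℤ), (0:ℕ))]))]

lemma k_level (x σ τ : ℝ) (hσ : 0 < σ) (hτ : 0 < τ) (j : ℕ) (k : ℝ) :
    iteratedDeriv (j+1) (fun k' => uBS σ τ x k') k =
      Real.exp k * evalE x k (σ * Real.sqrt τ) (Dk^[j] baseE) := by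
  have hv : σ * Real.sqrt τ ≠ 0 := by positivity
  refine genIter isOpen_univ
    (fun i => match i with
      | 0 => fun k' => uBS σ τ x k'
      | i+1 => fun k' => Real.exp k' * evalE x k' (σ * Real.sqrt τ) (Dk^[i] baseE))
    (fun k' => uBS σ τ x k') (fun t _ => rfl) ?_ (j+1) k (Set.mem_univ k)
  intro i t _
  match i with
  | 0 =>
    simpa [Function.iterate_zero_apply, baseE] using hasDerivAt_uBS_k x σ τ hσ hτ t
  | i+1 =>
    have h := hasDerivAt_evalE_k x (σ * Real.sqrt τ) hv t (Dk^[i] baseE)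
    rw [← Function.iterate_succ_apply' Dk i baseE] at h
    exact h

lemma tau_level_m (x k σ : ℝ) (hσ : 0 < σ) (m' q : ℕ) {τ : ℝ} (hτ : 0 < τ) :
    iteratedDeriv q (fun τ' => iteratedDeriv (m'+1) (fun k' => uBS σ τ' x k') k) τ =
      σ ^ (2*q) * (Real.exp k * evalE x k (σ * Real.sqrt τ) (Dw^[q] (Dk^[m'] baseE))) := by
  refine genIter isOpen_Ioi
    (fun i τ' => σ ^ (2*i) *
      (Real.exp k * evalE x k (σ * Real.sqrt τ') (Dw^[i] (Dk^[m'] baseE))))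
    (fun τ' => iteratedDeriv (m'+1) (fun k' => uBS σ τ' x k') k) ?_ ?_ q τ hτ
  · intro t ht
    show iteratedDeriv (m'+1) (fun k' => uBS σ t x k') k =
      σ ^ (2*0) * (Real.exp k * evalE x k (σ * Real.sqrt t) (Dw^[0] (Dk^[m'] baseE)))
    rw [k_level x σ t hσ ht m' k]
    simp
  · intro i t ht
    have h := tau_step x k σ hσ ht i (Dw^[i] (Dk^[m'] baseE))
    rw [← Function.iterate_succ_apply' Dw i] at h
    exact h

lemma tau_level_0 (x k σ : ℝ) (hσ : 0 < σ) (q' : ℕ) {τ : ℝ} (hτ : 0 < τ) :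
    iteratedDeriv (q'+1) (fun τ' => uBS σ τ' x k) τ =
      σ ^ (2*(q'+1)) * (Real.exp k * evalE x k (σ * Real.sqrt τ) (Dw^[q'] E0')) := by
  refine genIter isOpen_Ioi
    (fun i => match i with
      | 0 => fun τ' => uBS σ τ' x k
      | i+1 => fun τ' => σ ^ (2*(i+1)) *
          (Real.exp k * evalE x k (σ * Real.sqrt τ') (Dw^[i] E0')))
    (fun τ' => uBS σ τ' x k) (fun t _ => rfl) ?_ (q'+1) τ hτ
  intro i t ht
  match i with
  | 0 =>
    have h := hasDerivAt_uBS_tau x k σ hσ ht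
    simpa [Function.iterate_zero_apply, E0', pow_mul] using h
  | i+1 =>
    have h := tau_step x k σ hσ ht (i+1) (Dw^[i] E0')
    rw [← Function.iterate_succ_apply' Dw i] at h
    exact h

lemma sigma_level (x k τ : ℝ) (hτ : 0 < τ) (S : Ents) (G : ℝ → ℝ)
    (h0 : ∀ σ' ∈ Set.Ioi (0:ℝ), G σ' = evalS x k τ S σ') (n : ℕ) {σ : ℝ} (hσ : 0 < σ) :
    iteratedDeriv n G σ = evalS x k τ (Ds^[n] S) σ := by
  refine genIter isOpen_Ioi (fun j => evalS x k τ (Ds^[j] S)) G ?_ ?_ n σ hσ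
  · intro t ht; simpa using h0 t ht
  · intro j t ht
    have h := sigma_step x k τ hτ ht (Ds^[j] S)
    rwa [← Function.iterate_succ_apply' Ds j] at h

lemma sigma_level_0 (x k τ : ℝ) (hτ : 0 < τ) (n' : ℕ) {σ : ℝ} (hσ : 0 < σ) :
    iteratedDeriv (n'+1) (fun σ' => uBS σ' τ x k) σ = evalS x k τ (Ds^[n'] S1) σ := by
  refine genIter isOpen_Ioi
    (fun i => match i with
      | 0 => fun σ' => uBS σ' τ x k
      | i+1 => fun σ' => evalS x k τ (Ds^[i] S1) σ')
    (fun σ' => uBS σ' τ x k) (fun t _ => rfl) ?_ (n'+1) σ hσ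
  intro i t ht
  match i with
  | 0 =>
    have h := hasDerivAt_uBS_sigma x k τ hτ ht
    simpa [Function.iterate_zero_apply, S1, evalS, evalT] using h
  | i+1 =>
    have h := sigma_step x k τ hτ ht (Ds^[i] S1)
    rwa [← Function.iterate_succ_apply' Ds i] at h


def WFe (t : ℤ) (e : Expr) : Prop :=
  (e.1 ≠ 0 → t ≤ 0) ∧ ∀ mo ∈ e.2, mo.1 ≠ 0 → t ≤ mo.2.1

lemma WFe_mono {t t' : ℤ} (h : t' ≤ t) {e : Expr} (he : WFe t e) : WFe t' e :=
  ⟨fun hc => le_trans h (he.1 hc), fun mo hmo hc => le_trans h (he.2 mo hmo hc)⟩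

lemma WFe_Dk {t : ℤ} {e : Expr} (he : WFe t e) : WFe (t-1) (Dk e) := by
  obtain ⟨h1, h2⟩ := he
  constructor
  · intro hc; have := h1 hc; omega
  · intro mo hmo hc
    simp only [Dk, List.mem_cons, List.mem_flatMap] at hmo
    rcases hmo with rfl | ⟨mo', hmo', hin⟩
    · simp only at hc ⊢
      have := h1 (by simpa using hc)
      omega
    · have hmo'' := h2 mo' hmo'
      simp only [dkM, List.mem_cons, List.not_mem_nil, or_false] at hin
      rcases hin with rfl | rfl | rfl
      · simp only at hc ⊢; have := hmo'' hc; omega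
      · simp only at hc ⊢
        have : mo'.1 ≠ 0 := fun h0 => hc (by simp [h0])
        have := hmo'' this; omega
      · simp only at hc ⊢; have := hmo'' hc; omega

lemma WFe_Dv {t : ℤ} {e : Expr} (he : WFe t e) : WFe (t-1) (Dv e) := by
  obtain ⟨h1, h2⟩ := he
  constructor
  · simp [Dv]
  · intro mo hmo hc
    simp only [Dv, List.mem_cons, List.mem_flatMap] at hmo
    rcases hmo with rfl | rfl | ⟨mo', hmo', hin⟩
    · simp only at hc ⊢
      have := h1 (by simpa using hc); omega
    · simp only at hc ⊢
      have := h1 (by simpa using hc); omega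
    · have hmo'' := h2 mo' hmo'
      simp only [dvM, List.mem_cons, List.not_mem_nil, or_false] at hin
      rcases hin with rfl | rfl | rfl | rfl | rfl
      · simp only at hc ⊢
        have : mo'.1 ≠ 0 := fun h0 => hc (by simp [h0])
        have := hmo'' this; omega
      · simp only at hc ⊢
        have : mo'.1 ≠ 0 := fun h0 => hc (by simp [h0])
        have := hmo'' this; omega
      · simp only at hc ⊢
        have : mo'.1 ≠ 0 := fun h0 => hc (by simp [h0])
        have := hmo'' this; omega
      · simp only at hc ⊢; have := hmo'' hc; omega
      · simp only at hc ⊢; have := hmo'' hc; omega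

lemma WFe_Dw {t : ℤ} {e : Expr} (he : WFe t e) : WFe (t-2) (Dw e) := by
  have hv := WFe_Dv he
  constructor
  · simp [Dw]
  · intro mo hmo hc
    simp only [Dw, List.mem_map] at hmo
    obtain ⟨mo', hmo', rfl⟩ := hmo
    simp only [halfM] at hc ⊢
    have : mo'.1 ≠ 0 := fun h0 => hc (by simp [h0])
    have := hv.2 mo' hmo' this
    omega

lemma WFe_scaleE {t : ℤ} {e : Expr} (he : WFe t e) (s : ℝ) : WFe t (scaleE s e) := by
  obtain ⟨h1, h2⟩ := he
  constructor
  · intro hc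
    apply h1
    intro h0
    exact hc (by simp [scaleE, h0])
  · intro mo hmo hc
    simp only [scaleE, List.mem_map] at hmo
    obtain ⟨mo', hmo', rfl⟩ := hmo
    simp only at hc ⊢
    have : mo'.1 ≠ 0 := fun h0 => hc (by simp [h0])
    exact h2 mo' hmo' this

lemma WFe_Dk_iter {t : ℤ} {e : Expr} (he : WFe t e) (j : ℕ) : WFe (t - j) (Dk^[j] e) := by
  induction j with
  | zero => simpa using he
  | succ j ih =>
    rw [Function.iterate_succ_apply']
    have := WFe_Dk ih
    refine WFe_mono (by push_cast; omega) this

lemma WFe_Dw_iter {t : ℤ} {e : Expr} (he : WFe t e) (j : ℕ) : WFe (t - 2*j) (Dw^[j] e) := by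
  induction j with
  | zero => simpa using he
  | succ j ih =>
    rw [Function.iterate_succ_apply']
    have := WFe_Dw ih
    refine WFe_mono (by push_cast; omega) this

lemma vpow_le {M v : ℝ} (hv : 0 < v) (hvM : v ≤ M) {t a : ℤ} (hta : t ≤ a) :
    v ^ a ≤ M ^ ((a - t).toNat) * v ^ t := by
  have hcast : ((a - t).toNat : ℤ) = a - t := Int.toNat_of_nonneg (by omega)
  have h1 : v ^ a = v ^ t * v ^ ((a - t).toNat) := by
    rw [← zpow_natCast v ((a-t).toNat), ← zpow_add₀ hv.ne', hcast]
    congr 1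
    omega
  rw [h1]
  have h2 : v ^ ((a - t).toNat) ≤ M ^ ((a - t).toNat) :=
    pow_le_pow_left₀ hv.le hvM _
  have h3 : (0:ℝ) < v ^ t := zpow_pos hv t
  nlinarith

lemma boundM (M : ℝ) (hM : 0 < M) (t : ℤ) (mo : Mono) (h : mo.1 ≠ 0 → t ≤ mo.2.1) :
    ∃ C > 0, ∀ x k v : ℝ, 0 < v → v ≤ M → |evalM x k v mo| ≤ C * v ^ t := by
  obtain ⟨r, a, i⟩ := mo
  by_cases hr : r = 0
  · refine ⟨1, one_pos, fun x k v hv hvM => ?_⟩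
    simp only [evalM, hr, zero_mul, abs_zero, one_mul]
    exact le_of_lt (zpow_pos hv t)
  · refine ⟨|r| * (i.factorial * Real.exp 1) * M ^ ((a - t).toNat), by positivity, ?_⟩
    intro x k v hv hvM
    have hb := pow_mul_phi_le i (dmi x k v)
    have hvp := vpow_le hv hvM (h hr)
    have habs : |evalM x k v (r, a, i)| = |r| * v ^ a * |dmi x k v ^ i * phi (dmi x k v)| := by
      simp only [evalM]
      rw [show r * v^a * dmi x k v ^ i * phi (dmi x k v) =
        (r * v^a) * (dmi x k v ^ i * phi (dmi x k v)) by ring, abs_mul, abs_mul,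
        abs_of_pos (zpow_pos hv a)]
    rw [habs]
    have h1 : |r| * v ^ a * |dmi x k v ^ i * phi (dmi x k v)| ≤
        |r| * v ^ a * (i.factorial * Real.exp 1) := by
      apply mul_le_mul_of_nonneg_left hb
      positivity
    refine le_trans h1 ?_
    have h2 : v ^ a ≤ M ^ ((a - t).toNat) * v ^ t := hvp
    calc |r| * v ^ a * (i.factorial * Real.exp 1)
        ≤ |r| * (M ^ ((a - t).toNat) * v ^ t) * (i.factorial * Real.exp 1) := by
          apply mul_le_mul_of_nonneg_right _ (by positivity)
          apply mul_le_mul_of_nonneg_left h2 (abs_nonneg r)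
      _ = |r| * (i.factorial * Real.exp 1) * M ^ ((a - t).toNat) * v ^ t := by ring

lemma boundL (M : ℝ) (hM : 0 < M) (t : ℤ) (L : List Mono)
    (h : ∀ mo ∈ L, mo.1 ≠ 0 → t ≤ mo.2.1) :
    ∃ C > 0, ∀ x k v : ℝ, 0 < v → v ≤ M → |(L.map (evalM x k v)).sum| ≤ C * v ^ t := by
  induction L with
  | nil =>
    refine ⟨1, one_pos, fun x k v hv hvM => ?_⟩
    simp only [List.map_nil, List.sum_nil, abs_zero, one_mul]
    exact le_of_lt (zpow_pos hv t)
  | cons mo L ih =>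
    obtain ⟨C1, hC1, hb1⟩ := boundM M hM t mo (h mo (by simp))
    obtain ⟨C2, hC2, hb2⟩ := ih (fun mo' hmo' => h mo' (by simp [hmo']))
    refine ⟨C1 + C2, by positivity, fun x k v hv hvM => ?_⟩
    simp only [List.map_cons, List.sum_cons]
    calc |evalM x k v mo + (L.map (evalM x k v)).sum|
        ≤ |evalM x k v mo| + |(L.map (evalM x k v)).sum| := abs_add_le _ _
      _ ≤ C1 * v ^ t + C2 * v ^ t := add_le_add (hb1 x k v hv hvM) (hb2 x k v hv hvM)
      _ = (C1 + C2) * v ^ t := by ring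

lemma boundE (M : ℝ) (hM : 0 < M) (t : ℤ) (e : Expr) (he : WFe t e) :
    ∃ C > 0, ∀ x k v : ℝ, 0 < v → v ≤ M → |evalE x k v e| ≤ C * v ^ t := by
  obtain ⟨c, L⟩ := e
  obtain ⟨C2, hC2, hb2⟩ := boundL M hM t L he.2
  by_cases hc : c = 0
  · refine ⟨C2, hC2, fun x k v hv hvM => ?_⟩
    simp only [evalE, hc, zero_mul, zero_add]
    exact hb2 x k v hv hvM
  · have ht : t ≤ 0 := he.1 hc
    refine ⟨|c| * M ^ ((0 - t).toNat) + C2, by positivity, fun x k v hv hvM => ?_⟩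
    have hN : |c * normalCDF (dmi x k v)| ≤ |c| * M ^ ((0 - t).toNat) * v ^ t := by
      rw [abs_mul]
      have h1 : |c| * |normalCDF (dmi x k v)| ≤ |c| * 1 :=
        mul_le_mul_of_nonneg_left (abs_normalCDF_le_one _) (abs_nonneg c)
      have h2 : (1:ℝ) ≤ M ^ ((0 - t).toNat) * v ^ t := by
        have := vpow_le hv hvM (a := 0) ht
        simpa using this
      calc |c| * |normalCDF (dmi x k v)| ≤ |c| := by simpa using h1
        _ = |c| * 1 := by ring
        _ ≤ |c| * (M ^ ((0 - t).toNat) * v ^ t) :=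
            mul_le_mul_of_nonneg_left h2 (abs_nonneg c)
        _ = |c| * M ^ ((0 - t).toNat) * v ^ t := by ring
    calc |evalE x k v (c, L)| ≤ |c * normalCDF (dmi x k v)| + |(L.map (evalM x k v)).sum| :=
          abs_add_le _ _
      _ ≤ |c| * M ^ ((0 - t).toNat) * v ^ t + C2 * v ^ t :=
          add_le_add hN (hb2 x k v hv hvM)
      _ = (|c| * M ^ ((0 - t).toNat) + C2) * v ^ t := by ring

def WFS (α β : ℤ) (S : Ents) : Prop :=
  ∀ en ∈ S, en.1 = α + 2*(en.2.1 : ℤ) ∧ WFe (β - 2*(en.2.1 : ℤ)) en.2.2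

lemma WFS_Ds {α β : ℤ} {S : Ents} (h : WFS α β S) : WFS (α-1) β (Ds S) := by
  intro en hen
  simp only [Ds, List.mem_flatMap] at hen
  obtain ⟨en', hen', hin⟩ := hen
  obtain ⟨hb, he⟩ := h en' hen'
  simp only [DsE, List.mem_cons, List.not_mem_nil, or_false] at hin
  rcases hin with rfl | rfl
  · refine ⟨by simp only; omega, ?_⟩
    simpa using WFe_scaleE he _
  · refine ⟨by simp only; push_cast; omega, ?_⟩
    simp only
    have := WFe_scaleE (WFe_Dw he) 2
    refine WFe_mono (by push_cast; omega) this

lemma WFS_Ds_iter {α β : ℤ} {S : Ents} (h : WFS α β S) (j : ℕ) :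
    WFS (α - j) β (Ds^[j] S) := by
  induction j with
  | zero => simpa using h
  | succ j ih =>
    rw [Function.iterate_succ_apply']
    have := WFS_Ds ih
    have harg : α - (↑j + 1) = α - ↑j - 1 := by push_cast; omega
    rw [show ((j+1 : ℕ) : ℤ) = (j : ℤ) + 1 by push_cast; ring]
    rw [harg]
    exact this

lemma boundT (M : ℝ) (hM : 0 < M) (α β : ℤ) (en : Entry)
    (hb : en.1 = α + 2*(en.2.1 : ℤ)) (he : WFe (β - 2*(en.2.1 : ℤ)) en.2.2) :
    ∃ C > 0, ∀ x k σ τ : ℝ, 0 < σ → 0 < τ → σ * Real.sqrt τ ≤ M →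
      |evalT x k τ en σ| ≤ C * Real.exp k * σ ^ α * (σ * Real.sqrt τ) ^ β := by
  obtain ⟨b, c, e⟩ := en
  simp only at hb he
  obtain ⟨C, hC, hbd⟩ := boundE M hM _ e he
  refine ⟨C, hC, fun x k σ τ hσ hτ hvM => ?_⟩
  set v := σ * Real.sqrt τ with hvdef
  have hst : (0:ℝ) < Real.sqrt τ := Real.sqrt_pos.2 hτ
  have hv : 0 < v := by positivity
  have hv2 : v ^ 2 = σ ^ 2 * τ := by
    rw [hvdef, mul_pow, Real.sq_sqrt hτ.le]
  have key : σ ^ b * τ ^ c * v ^ (β - 2*(c:ℤ)) = σ ^ α * v ^ β := by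
    have h1 : σ ^ b = σ ^ α * (σ^2)^c := by
      rw [hb, zpow_add₀ hσ.ne']
      congr 1
      rw [show (2*(c:ℤ)) = ((2*c : ℕ) : ℤ) by push_cast; ring, zpow_natCast, pow_mul]
    have h2 : v ^ (β - 2*(c:ℤ)) = v ^ β / ((v^2)^c) := by
      rw [zpow_sub₀ hv.ne']
      congr 1
      rw [show (2*(c:ℤ)) = ((2*c : ℕ) : ℤ) by push_cast; ring, zpow_natCast, pow_mul]
    rw [h1, h2, hv2, mul_pow]
    have hσ2 : ((σ:ℝ)^2)^c ≠ 0 := by positivity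
    have hτc : (τ:ℝ)^c ≠ 0 := by positivity
    field_simp
  have habs : |evalT x k τ (b, c, e) σ| = σ ^ b * τ ^ c * Real.exp k * |evalE x k v e| := by
    simp only [evalT]
    rw [abs_mul, abs_mul, abs_mul, abs_of_pos (zpow_pos hσ b), abs_of_pos (pow_pos hτ c),
      abs_of_pos (Real.exp_pos k)]
    ring
  rw [habs]
  calc σ ^ b * τ ^ c * Real.exp k * |evalE x k v e|
      ≤ σ ^ b * τ ^ c * Real.exp k * (C * v ^ (β - 2*(c:ℤ))) := by
        apply mul_le_mul_of_nonneg_left (hbd x k v hv hvM)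
        positivity
    _ = C * Real.exp k * (σ ^ b * τ ^ c * v ^ (β - 2*(c:ℤ))) := by ring
    _ = C * Real.exp k * (σ ^ α * v ^ β) := by rw [key]
    _ = C * Real.exp k * σ ^ α * v ^ β := by ring

lemma boundS (M : ℝ) (hM : 0 < M) (α β : ℤ) (S : Ents) (h : WFS α β S) :
    ∃ C > 0, ∀ x k σ τ : ℝ, 0 < σ → 0 < τ → σ * Real.sqrt τ ≤ M →
      |evalS x k τ S σ| ≤ C * Real.exp k * σ ^ α * (σ * Real.sqrt τ) ^ β := by
  induction S with
  | nil =>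
    refine ⟨1, one_pos, fun x k σ τ hσ hτ hvM => ?_⟩
    simp only [evalS, List.map_nil, List.sum_nil, abs_zero]
    have : (0:ℝ) < Real.exp k * σ ^ α * (σ * Real.sqrt τ) ^ β := by
      have hst : (0:ℝ) < Real.sqrt τ := Real.sqrt_pos.2 hτ
      have : (0:ℝ) < σ * Real.sqrt τ := by positivity
      positivity
    nlinarith
  | cons en S ih =>
    obtain ⟨C1, hC1, hb1⟩ := boundT M hM α β en (h en (by simp)).1 (h en (by simp)).2
    obtain ⟨C2, hC2, hb2⟩ := ih (fun en' hen' => h en' (by simp [hen']))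
    refine ⟨C1 + C2, by positivity, fun x k σ τ hσ hτ hvM => ?_⟩
    simp only [evalS, List.map_cons, List.sum_cons]
    calc |evalT x k τ en σ + (S.map (fun en' => evalT x k τ en' σ)).sum|
        ≤ |evalT x k τ en σ| + |(S.map (fun en' => evalT x k τ en' σ)).sum| := abs_add_le _ _
      _ ≤ C1 * Real.exp k * σ ^ α * (σ * Real.sqrt τ) ^ β +
          C2 * Real.exp k * σ ^ α * (σ * Real.sqrt τ) ^ β :=
          add_le_add (hb1 x k σ τ hσ hτ hvM) (hb2 x k σ τ hσ hτ hvM)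
      _ = (C1 + C2) * Real.exp k * σ ^ α * (σ * Real.sqrt τ) ^ β := by ring

lemma WFe_baseE : WFe 0 baseE := ⟨fun _ => le_refl 0, by simp [baseE]⟩

lemma WFe_E0' : WFe (-1) E0' := by
  constructor
  · simp [E0']
  · intro mo hmo _
    simp only [E0', List.mem_cons, List.not_mem_nil, or_false] at hmo
    subst hmo
    simp

lemma WFS_S1 : WFS (-1) 1 S1 := by
  intro en hen
  simp only [S1, List.mem_cons, List.not_mem_nil, or_false] at hen
  subst hen
  refine ⟨by simp, ?_, ?_⟩
  · simp
  · intro mo hmo _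
    simp only [List.mem_cons, List.not_mem_nil, or_false] at hmo
    subst hmo
    simp

theorem stmt_10 (M : ℝ) (hM : 0 < M) (m q n : ℕ) (hpos : 0 < m + q + n) :
    ∃ C > 0, ∀ x k σ τ : ℝ, 0 < σ → 0 < τ → σ * Real.sqrt τ ≤ M →
      |iteratedDeriv n
          (fun σ' => iteratedDeriv q
            (fun τ' => iteratedDeriv m (fun k' => uBS σ' τ' x k') k) τ) σ| ≤
        C * Real.exp k * σ ^ (-(n : ℝ) + 2 * q) *
          (σ * Real.sqrt τ) ^ (1 - (m : ℝ) - 2 * q) := by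
  have hrpow : ∀ (y : ℝ) (a : ℤ) (r : ℝ), 0 < y → r = (a : ℝ) → y ^ r = y ^ a := by
    intro y a r hy hr
    rw [hr, Real.rpow_intCast]
  match m, q with
  | 0, 0 =>
    match n with
    | 0 => simp at hpos
    | n'+1 =>
      have hWFS := WFS_Ds_iter WFS_S1 n'
      obtain ⟨C, hC, hbd⟩ := boundS M hM _ _ _ hWFS
      refine ⟨C, hC, fun x k σ τ hσ hτ hvM => ?_⟩
      simp only [iteratedDeriv_zero]
      rw [sigma_level_0 x k τ hτ n' hσ]
      rw [hrpow σ (-1 - (n' : ℤ)) _ hσ (by push_cast; ring),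
        hrpow (σ * Real.sqrt τ) 1 _ (by positivity) (by push_cast; ring)]
      exact hbd x k σ τ hσ hτ hvM
  | 0, q'+1 =>
    set q := q' + 1 with hqdef
    set S0 : Ents := [(((2*q : ℕ) : ℤ), (0:ℕ), Dw^[q'] E0')] with hS0
    have hWFS : WFS ((2*q : ℕ) : ℤ) (1 - 2*(q:ℤ)) S0 := by
      intro en hen
      simp only [hS0, List.mem_cons, List.not_mem_nil, or_false] at hen
      subst hen
      refine ⟨by simp, ?_⟩
      simp only
      have := WFe_Dw_iter WFe_E0' q'
      refine WFe_mono (by push_cast; omega) this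
    have hWFS2 := WFS_Ds_iter hWFS n
    obtain ⟨C, hC, hbd⟩ := boundS M hM _ _ _ hWFS2
    refine ⟨C, hC, fun x k σ τ hσ hτ hvM => ?_⟩
    simp only [iteratedDeriv_zero]
    have h0 : ∀ σ' ∈ Set.Ioi (0:ℝ),
        iteratedDeriv q (fun τ' => uBS σ' τ' x k) τ = evalS x k τ S0 σ' := by
      intro σ' hσ'
      rw [tau_level_0 x k σ' hσ' q' hτ]
      simp only [hS0, evalS, evalT, List.map_cons, List.map_nil, List.sum_cons, List.sum_nil,
        add_zero, pow_zero, zpow_natCast]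
      ring
    rw [sigma_level x k τ hτ S0 _ h0 n hσ]
    rw [hrpow σ (((2*q : ℕ) : ℤ) - (n : ℤ)) _ hσ (by push_cast; ring),
      hrpow (σ * Real.sqrt τ) (1 - 2*(q:ℤ)) _ (by positivity) (by push_cast; ring)]
    exact hbd x k σ τ hσ hτ hvM
  | m'+1, q =>
    set m := m' + 1 with hmdef
    set S0 : Ents := [(((2*q : ℕ) : ℤ), (0:ℕ), Dw^[q] (Dk^[m'] baseE))] with hS0
    have hWFS : WFS ((2*q : ℕ) : ℤ) (1 - (m:ℤ) - 2*(q:ℤ)) S0 := by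
      intro en hen
      simp only [hS0, List.mem_cons, List.not_mem_nil, or_false] at hen
      subst hen
      refine ⟨by simp, ?_⟩
      simp only
      have := WFe_Dw_iter (WFe_Dk_iter WFe_baseE m') q
      refine WFe_mono (by push_cast; omega) this
    have hWFS2 := WFS_Ds_iter hWFS n
    obtain ⟨C, hC, hbd⟩ := boundS M hM _ _ _ hWFS2
    refine ⟨C, hC, fun x k σ τ hσ hτ hvM => ?_⟩
    have h0 : ∀ σ' ∈ Set.Ioi (0:ℝ),
        iteratedDeriv q (fun τ' => iteratedDeriv m (fun k' => uBS σ' τ' x k') k) τ =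
          evalS x k τ S0 σ' := by
      intro σ' hσ'
      rw [tau_level_m x k σ' hσ' m' q hτ]
      simp only [hS0, evalS, evalT, List.map_cons, List.map_nil, List.sum_cons, List.sum_nil,
        add_zero, pow_zero, zpow_natCast]
      ring
    rw [sigma_level x k τ hτ S0 _ h0 n hσ]
    rw [hrpow σ (((2*q : ℕ) : ℤ) - (n : ℤ)) _ hσ (by push_cast; ring),
      hrpow (σ * Real.sqrt τ) (1 - (m:ℤ) - 2*(q:ℤ)) _ (by positivity) (by push_cast; ring)]
    exact hbd x k σ τ hσ hτ hvM
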